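/- arXiv:1903.09619 — 4 statements merged into one kernel-verified Lean document; each statement's English description precedes it below -/
import Mathlib

section
/- Let m, n ≥ 2 be natural numbers. If both m and n are even, then H(mn) = H(m) + H(n). If at least one of m and n is odd, then H(mn) = H(m) + H(n) − 1. -/
/-- The height function: H(1) = 0 and H(n) = H(φ(n)) + 1 for n ≥ 2. -/
def H : ℕ → ℕ
  | 0 => 0
  | 1 => 0
  | n + 2 => H (Nat.totient (n + 2)) + 1
  decreasing_by exact Nat.totient_lt _ (by omega)

/-- The sum-of-heights function S(n) = ∑_{k=1}^n H(k). -/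
def S (n : ℕ) : ℕ := ∑ k ∈ Finset.Icc 1 n, H k

lemma H_one : H 1 = 0 := by rw [H]

lemma H_succ (n : ℕ) (h : 2 ≤ n) : H n = H n.totient + 1 := by
  obtain ⟨k, rfl⟩ := Nat.exists_eq_add_of_le h
  rw [Nat.add_comm 2 k, H]

lemma H_pos (n : ℕ) (h : 2 ≤ n) : 1 ≤ H n := by
  rw [H_succ n h]; omega

lemma H_two : H 2 = 1 := by
  rw [H_succ 2 le_rfl, Nat.totient_two, H_one]

lemma H_double_odd (n : ℕ) (h3 : 3 ≤ n) (hodd : Odd n) : H (2 * n) = H n := by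
  have hcop : Nat.Coprime 2 n := (Nat.prime_two.coprime_iff_not_dvd).mpr
    (by rw [Nat.two_dvd_ne_zero, ← Nat.odd_iff]; exact hodd)
  rw [H_succ (2 * n) (by nlinarith), Nat.totient_mul hcop, Nat.totient_two, one_mul,
    ← H_succ n (by omega)]

lemma H_double_even (n : ℕ) (h2 : 2 ≤ n) (heven : Even n) : H (2 * n) = H n + 1 := by
  induction n using Nat.strong_induction_on with
  | _ n ih =>
  have hdvd : (2 : ℕ) ∣ n := heven.two_dvd
  rw [H_succ (2 * n) (by omega), Nat.totient_mul_of_prime_of_dvd Nat.prime_two hdvd,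
    H_succ n h2]
  congr 1
  rcases Nat.lt_or_ge n 3 with h | h
  · interval_cases n
    · rw [Nat.totient_two, mul_one, H_two, H_one]
  · have he : Even n.totient := Nat.totient_even (by omega)
    have hp : 2 ≤ n.totient := by
      have := Nat.totient_pos.mpr (show 0 < n by omega)
      rcases he with ⟨k, hk⟩; omega
    exact ih n.totient (Nat.totient_lt n (by omega)) hp he

lemma not_even_of_odd {n : ℕ} (h : Odd n) : ¬ Even n := by
  rw [Nat.even_iff]; rw [Nat.odd_iff] at h; omega

lemma three_le_of_odd {n : ℕ} (h2 : 2 ≤ n) (h : Odd n) : 3 ≤ n := by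
  rw [Nat.odd_iff] at h; omega

lemma Q : ∀ μ m n : ℕ, m * n + m ≤ μ → 2 ≤ m → 2 ≤ n →
    (Even m ∧ Even n → H (m * n) = H m + H n) ∧
    (¬ (Even m ∧ Even n) → H (m * n) + 1 = H m + H n) := by
  intro μ
  induction μ using Nat.strong_induction_on with
  | _ μ ih =>
  intro m n hμ hm hn
  have key : ∀ m' n' : ℕ, m' * n' + m' < m * n + m → 2 ≤ m' → 2 ≤ n' →
      (Even m' ∧ Even n' → H (m' * n') = H m' + H n') ∧
      (¬ (Even m' ∧ Even n') → H (m' * n') + 1 = H m' + H n') := by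
    intro m' n' hlt
    exact ih (m' * n' + m') (by omega) m' n' le_rfl
  clear ih hμ
  rcases Nat.even_or_odd m with hme | hmo
  · -- m even
    obtain ⟨a, ha⟩ := hme
    have ham : m = 2 * a := by omega
    subst ham
    have hmev : Even (2 * a) := even_two_mul a
    have ha1 : 1 ≤ a := by omega
    rcases eq_or_lt_of_le ha1 with h1 | h2
    · -- a = 1, m = 2
      have ha' : a = 1 := h1.symm
      subst ha'
      simp only [mul_one]
      rcases Nat.even_or_odd n with hne | hno
      · refine ⟨fun _ => ?_, fun hc => absurd ⟨by decide, hne⟩ hc⟩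
        rw [H_double_even n hn hne, H_two]; omega
      · refine ⟨fun h => absurd h.2 (not_even_of_odd hno), fun _ => ?_⟩
        rw [H_double_odd n (three_le_of_odd hn hno) hno, H_two]; omega
    · -- a ≥ 2
      have ha2 : 2 ≤ a := h2
      have hIH := key a n (by nlinarith) ha2 hn
      have hprod : 2 * a * n = 2 * (a * n) := by ring
      have han2 : 2 ≤ a * n := by nlinarith
      rcases Nat.even_or_odd a with hae | hao
      · -- a even
        have hane : Even (a * n) := hae.mul_right n
        have hm2 : H (2 * a) = H a + 1 := H_double_even a ha2 hae
        rw [hprod, H_double_even (a * n) han2 hane, hm2]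
        rcases Nat.even_or_odd n with hne | hno
        · have := hIH.1 ⟨hae, hne⟩
          exact ⟨fun _ => by omega, fun hc => absurd ⟨hmev, hne⟩ hc⟩
        · have := hIH.2 (fun ⟨_, h⟩ => (not_even_of_odd hno) h)
          exact ⟨fun h => absurd h.2 (not_even_of_odd hno), fun _ => by omega⟩
      · -- a odd ≥ 3
        have ha3 : 3 ≤ a := three_le_of_odd ha2 hao
        have hm2 : H (2 * a) = H a := H_double_odd a ha3 hao
        have hIHo := hIH.2 (fun ⟨h, _⟩ => (not_even_of_odd hao) h)
        rcases Nat.even_or_odd n with hne | hno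
        · have hane : Even (a * n) := hne.mul_left a
          rw [hprod, H_double_even (a * n) han2 hane, hm2]
          exact ⟨fun _ => by omega, fun hc => absurd ⟨hmev, hne⟩ hc⟩
        · have hano : Odd (a * n) := hao.mul hno
          rw [hprod, H_double_odd (a * n) (by nlinarith) hano, hm2]
          exact ⟨fun h => absurd h.2 (not_even_of_odd hno), fun _ => by omega⟩
  · -- m odd
    have hm3 : 3 ≤ m := three_le_of_odd hm hmo
    have hmne : ¬ Even m := not_even_of_odd hmo
    rcases Nat.even_or_odd n with hne | hno
    · -- m odd, n even : n = 2b
      obtain ⟨b, hb⟩ := hne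
      have hbn : n = 2 * b := by omega
      subst hbn
      have hnev : Even (2 * b) := even_two_mul b
      have hb1 : 1 ≤ b := by omega
      have hswap : m * (2 * b) = 2 * (m * b) := by ring
      rcases eq_or_lt_of_le hb1 with h1 | h2
      · -- b = 1, n = 2
        have hb' : b = 1 := h1.symm
        subst hb'
        simp only [mul_one] at hswap ⊢
        rw [hswap, H_double_odd m hm3 hmo, H_two]
        exact ⟨fun h => absurd h.1 hmne, fun _ => by omega⟩
      · have hb2 : 2 ≤ b := h2
        have hIH := (key m b (by nlinarith) hm hb2).2 (fun ⟨h, _⟩ => hmne h)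
        have hmb2 : 2 ≤ m * b := by nlinarith
        rcases Nat.even_or_odd b with hbe | hbo
        · have hmbe : Even (m * b) := hbe.mul_left m
          rw [hswap, H_double_even (m * b) hmb2 hmbe, H_double_even b hb2 hbe]
          exact ⟨fun h => absurd h.1 hmne, fun _ => by omega⟩
        · have hb3 : 3 ≤ b := three_le_of_odd hb2 hbo
          have hmbo : Odd (m * b) := hmo.mul hbo
          rw [hswap, H_double_odd (m * b) (by nlinarith) hmbo, H_double_odd b hb3 hbo]
          exact ⟨fun h => absurd h.1 hmne, fun _ => by omega⟩
    · -- both odd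
      have hn3 : 3 ≤ n := three_le_of_odd hn hno
      have hnne : ¬ Even n := not_even_of_odd hno
      refine ⟨fun h => absurd h.1 hmne, fun _ => ?_⟩
      obtain ⟨p, hpp, hpdvd⟩ := Nat.exists_prime_and_dvd (show m ≠ 1 by omega)
      have hp2 : 2 ≤ p := hpp.two_le
      have hpodd : Odd p := by
        rcases Nat.even_or_odd p with h | h
        · exact absurd (even_iff_two_dvd.mpr (dvd_trans h.two_dvd hpdvd)) hmne
        · exact h
      have hp3 : 3 ≤ p := three_le_of_odd hp2 hpodd
      obtain ⟨a, hma⟩ := hpdvd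
      have ha1 : 1 ≤ a := by
        rcases Nat.eq_zero_or_pos a with h | h
        · rw [h, mul_zero] at hma; omega
        · exact h
      rcases eq_or_lt_of_le ha1 with h1 | h2
      · -- m = p prime
        have ha : a = 1 := h1.symm
        rw [ha, mul_one] at hma
        subst hma
        have hφe : Even n.totient := Nat.totient_even (by omega)
        have hφ2 : 2 ≤ n.totient := by
          have := Nat.totient_pos.mpr (show 0 < n by omega)
          rcases hφe with ⟨k, hk⟩; omega
        have hφlt : n.totient < n := Nat.totient_lt n (by omega)
        by_cases hdvd : m ∣ n
        · have htot : (m * n).totient = m * n.totient :=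
            Nat.totient_mul_of_prime_of_dvd hpp hdvd
          have hIH := (key m n.totient (by nlinarith) hp2 hφ2).2
            (fun ⟨h, _⟩ => (not_even_of_odd hpodd) h)
          rw [H_succ (m * n) (by nlinarith), htot, H_succ n hn]
          omega
        · have hcop : Nat.Coprime m n := (hpp.coprime_iff_not_dvd).mpr hdvd
          have htot : (m * n).totient = (m - 1) * n.totient := by
            rw [Nat.totient_mul hcop, Nat.totient_prime hpp]
          have hp1e : Even (m - 1) := by
            rcases hpodd with ⟨k, hk⟩; exact ⟨k, by omega⟩
          have hp12 : 2 ≤ m - 1 := by omega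
          have hmeas : (m - 1) * n.totient + (m - 1) < m * n + m := by
            have h1 : (m - 1) * n.totient ≤ (m - 1) * (n - 1) :=
              Nat.mul_le_mul_left _ (by omega)
            have h2 : (m - 1) * (n - 1) + (m - 1) = (m - 1) * n := by
              rw [← Nat.mul_succ]; congr 1; omega
            have h3 : (m - 1) * n < m * n := (Nat.mul_lt_mul_right (show 0 < n by omega)).mpr (by omega)
            omega
          have hIH := (key (m - 1) n.totient hmeas hp12 hφ2).1 ⟨hp1e, hφe⟩
          rw [H_succ (m * n) (by nlinarith), htot, H_succ n hn, H_succ m hp2, Nat.totient_prime hpp]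
          omega
      · -- a ≥ 2, m = p * a
        have ha2 : 2 ≤ a := h2
        have hao : Odd a := by
          rcases Nat.even_or_odd a with h | h
          · exact absurd (hma ▸ h.mul_left p) hmne
          · exact h
        have ha3 : 3 ≤ a := three_le_of_odd ha2 hao
        have hano : Odd (a * n) := hao.mul hno
        have han2 : 2 ≤ a * n := by nlinarith
        have hplt : p < m := by
          rw [hma]; exact (Nat.lt_mul_iff_one_lt_right (by omega)).mpr ha2
        have halt : a < m := by
          rw [hma]; exact (Nat.lt_mul_iff_one_lt_left (by omega)).mpr (by omega)
        have hpan : p * (a * n) = m * n := by rw [hma]; ring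
        have hanlt : a * n < m * n := (Nat.mul_lt_mul_right (show 0 < n by omega)).mpr halt
        have hmmn : m ≤ m * n := Nat.le_mul_of_pos_right m (by omega)
        have hIH1 := (key p (a * n) (by omega) hp2 han2).2
          (fun ⟨h, _⟩ => (not_even_of_odd hpodd) h)
        have hIH2 := (key a n (by omega) ha2 hn).2
          (fun ⟨h, _⟩ => (not_even_of_odd hao) h)
        have hIH3 := (key p a (by rw [← hma]; omega) hp2 ha2).2
          (fun ⟨h, _⟩ => (not_even_of_odd hpodd) h)
        have hassoc : m * n = p * (a * n) := by rw [hma]; ring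
        have hm' : H m = H (p * a) := by rw [hma]
        rw [hassoc]
        omega

theorem height_additivity (m n : ℕ) (hm : 2 ≤ m) (hn : 2 ≤ n) :
    (Even m → Even n → H (m * n) = H m + H n) ∧
    ((Odd m ∨ Odd n) → H (m * n) = H m + H n - 1) := by
  have hQ := Q (m * n + m) m n le_rfl hm hn
  refine ⟨fun h1 h2 => hQ.1 ⟨h1, h2⟩, fun h => ?_⟩
  have := hQ.2 (by
    rintro ⟨h1, h2⟩
    rcases h with h | h
    · exact (not_even_of_odd h) h1
    · exact (not_even_of_odd h) h2)
  omega
end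

section
/- If m is an even natural number (m ≥ 2), then H(2m) = H(m) + 1. -/
lemma H_eq (n : ℕ) (hn : 2 ≤ n) : H n = H (Nat.totient n) + 1 := by
  obtain ⟨k, rfl⟩ : ∃ k, n = k + 2 := ⟨n - 2, by omega⟩
  rw [H]

lemma tot2 (m : ℕ) (heven : Even m) (hm : 1 ≤ m) :
    Nat.totient (2 * m) = 2 * Nat.totient m :=
  Nat.totient_mul_of_prime_of_dvd Nat.prime_two heven.two_dvd

theorem height_two_mul_even (m : ℕ) (hm : 2 ≤ m) (heven : Even m) :
    H (2 * m) = H m + 1 := by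
  induction m using Nat.strong_induction_on with
  | _ m ih =>
    have hphi : Nat.totient (2 * m) = 2 * Nat.totient m := tot2 m heven (by omega)
    rw [H_eq (2 * m) (by omega), hphi, H_eq m hm]
    rcases eq_or_lt_of_le (show 1 ≤ m.totient from Nat.totient_pos.mpr (by omega)) with h1 | h1
    · -- φ(m) = 1, so m = 2
      rw [← h1, show (2*1 : ℕ) = 2 from rfl, H_eq 2 le_rfl, Nat.totient_two]
    · have hm3 : 3 ≤ m := by
        rcases Nat.lt_or_ge m 3 with h | h
        · have : m = 2 := by omega
          simp [this, Nat.totient_two] at h1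
        · exact h
      have heven' : Even m.totient := Nat.totient_even hm3
      rw [ih m.totient (Nat.totient_lt m (by omega)) h1 heven']
end

section
/- If m > 1 is a natural number, then H(3m) = H(m) + 1. -/
lemma H_rec {n : ℕ} (h : 2 ≤ n) : H n = H n.totient + 1 := by
  obtain ⟨k, rfl⟩ : ∃ k, n = k + 2 := ⟨n - 2, by omega⟩
  rw [H]

lemma H_double : ∀ k, 1 ≤ k → (Even k ∨ k = 1) → H (2 * k) = H k + 1 := by
  intro k
  induction k using Nat.strong_induction_on with
  | _ k ih =>
    intro hk hek
    rcases hek with he | rfl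
    · obtain ⟨j, rfl⟩ := he
      rcases Nat.eq_or_lt_of_le (show 2 ≤ j + j by omega) with h2 | h3
      · -- j + j = 2, i.e. k = 2
        have : j = 1 := by omega
        subst this
        have e4 : Nat.totient 4 = 2 := by decide
        have e2 : Nat.totient 2 = 1 := by decide
        rw [show 2 * (1 + 1) = 4 from rfl, H_rec (by norm_num), e4,
          H_rec (by norm_num : (2:ℕ) ≤ 2), e2]
      ·
        set k := j + j with hkdef
        have hk2 : 2 ∣ k := ⟨j, by omega⟩
        have hkk : 2 < k := h3
        have h1 : (2 * k).totient = 2 * k.totient :=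
          Nat.totient_mul_of_prime_of_dvd Nat.prime_two hk2
        have hlt : k.totient < k := Nat.totient_lt _ (by omega)
        have hpos : 0 < k.totient := Nat.totient_pos.mpr (by omega)
        have hev : Even k.totient := Nat.totient_even hkk
        rw [H_rec (by omega), h1, ih k.totient hlt hpos (Or.inl hev),
          H_rec (show 2 ≤ k by omega)]
    · have e2 : Nat.totient 2 = 1 := by decide
      rw [show 2 * 1 = 2 from rfl, H_rec (by norm_num : (2:ℕ) ≤ 2), e2]

theorem height_three_mul (m : ℕ) (hm : 1 < m) :
    H (3 * m) = H m + 1 := by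
  induction m using Nat.strong_induction_on with
  | _ m ih =>
    by_cases h3 : 3 ∣ m
    · -- m ≥ 3, φ(3m) = 3 φ(m)
      have hm3 : 3 ≤ m := Nat.le_of_dvd (by omega) h3
      have h1 : (3 * m).totient = 3 * m.totient :=
        Nat.totient_mul_of_prime_of_dvd Nat.prime_three h3
      have hlt : m.totient < m := Nat.totient_lt _ (by omega)
      have hpos : 0 < m.totient := Nat.totient_pos.mpr (by omega)
      have h2 : 1 < m.totient := by
        rcases Nat.lt_or_ge 1 m.totient with h | h
        · exact h
        · have h1 : m.totient = 1 := by omega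
          have := Nat.totient_eq_one_iff.mp h1
          omega
      rw [H_rec (by omega), h1, ih m.totient hlt h2, H_rec (show 2 ≤ m by omega)]
    · -- coprime case: φ(3m) = 2 φ(m)
      have hcop : Nat.Coprime 3 m := (Nat.Prime.coprime_iff_not_dvd Nat.prime_three).mpr h3
      have h1 : (3 * m).totient = 2 * m.totient := by
        rw [Nat.totient_mul hcop]
        norm_num [Nat.totient_prime Nat.prime_three]
      have hpos : 0 < m.totient := Nat.totient_pos.mpr (by omega)
      have hev : Even m.totient ∨ m.totient = 1 := by
        rcases Nat.lt_or_ge m 3 with h | h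
        · have : m = 2 := by omega
          subst this; right; decide
        · left; exact Nat.totient_even (by omega)
      rw [H_rec (by omega), h1, H_double m.totient hpos hev, H_rec (show 2 ≤ m by omega)]
end

section
/- For every h ≥ 2, the largest odd number at height h is 3^{h−1}: H(3^{h−1}) = h, and every odd natural number n with H(n) = h satisfies n ≤ 3^{h−1}. -/
lemma H_def {n : ℕ} (hn : 2 ≤ n) : H n = H n.totient + 1 := by
  obtain ⟨k, rfl⟩ : ∃ k, n = k + 2 := ⟨n - 2, by omega⟩
  rw [H]

lemma H_double_even_s9 : ∀ m, Even m → 2 ≤ m → H (2 * m) = H m + 1 := by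
  intro m
  induction m using Nat.strong_induction_on with
  | _ m ih =>
    intro hev h2
    rcases eq_or_lt_of_le h2 with h | h
    · subst h
      rw [show (2:ℕ)*2 = 4 from rfl, H_def (by norm_num),
        show Nat.totient 4 = 2 from by decide, H_two]
    · have h3 : 3 ≤ m := h
      have htot : (2 * m).totient = 2 * m.totient :=
        Nat.totient_mul_of_prime_of_dvd Nat.prime_two hev.two_dvd
      have hpe : Even m.totient := Nat.totient_even (by omega)
      have hpp : 0 < m.totient := Nat.totient_pos.mpr (by omega)
      have hp2 : 2 ≤ m.totient := by
        rcases hpe with ⟨r, hr⟩; omega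
      have hlt : m.totient < m := Nat.totient_lt m (by omega)
      rw [H_def (by omega : 2 ≤ 2 * m), htot, ih m.totient hlt hpe hp2,
        H_def (by omega : 2 ≤ m)]

lemma H_two_pow : ∀ w, 1 ≤ w → H (2 ^ w) = w := by
  intro w
  induction w with
  | zero => omega
  | succ n ih =>
    intro _
    rcases Nat.eq_or_lt_of_le (Nat.one_le_iff_ne_zero.mpr (by omega) : 1 ≤ n + 1) with h | h
    · rw [← h]; simpa using H_two
    · have hn : 1 ≤ n := by omega
      rw [pow_succ, mul_comm, H_double_even_s9 (2^n) ⟨2^(n-1), by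
          rw [← two_mul, ← pow_succ']; congr 1; omega⟩ (by
          calc 2 = 2^1 := rfl
          _ ≤ 2^n := Nat.pow_le_pow_right (by norm_num) hn), ih hn]

lemma H_two_mul_odd {c : ℕ} (hc : Odd c) (hc3 : 3 ≤ c) : H (2 * c) = H c := by
  have : (2 * c).totient = c.totient := by
    rw [Nat.totient_mul (Nat.coprime_two_left.mpr hc), Nat.totient_two, one_mul]
  rw [H_def (by omega), this, ← H_def (by omega)]

lemma H_two_pow_mul_odd {c : ℕ} (hc : Odd c) (hc3 : 3 ≤ c) :
    ∀ w, 1 ≤ w → H (2 ^ w * c) = (w - 1) + H c := by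
  intro w
  induction w with
  | zero => omega
  | succ n ih =>
    intro _
    rcases Nat.eq_or_lt_of_le (Nat.one_le_iff_ne_zero.mpr (by omega) : 1 ≤ n + 1) with h | h
    · rw [← h, pow_one, H_two_mul_odd hc hc3]; omega
    · have hn : 1 ≤ n := by omega
      have heven : Even (2 ^ n * c) := ⟨2^(n-1)*c, by
        rw [← two_mul, ← mul_assoc, ← pow_succ']; congr 2; omega⟩
      have hge : 2 ≤ 2 ^ n * c := by
        have : 2^1 ≤ 2^n := Nat.pow_le_pow_right (by norm_num) hn
        nlinarith
      rw [pow_succ, mul_comm (2^n) 2, mul_assoc, H_double_even_s9 _ heven hge, ih hn]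
      omega


lemma prime_odd_three_le {u p : ℕ} (hu : Odd u) (hp : p ∈ u.primeFactors) : 3 ≤ p := by
  have hpp := Nat.prime_of_mem_primeFactors hp
  have hdvd := Nat.dvd_of_mem_primeFactors hp
  have h1 : u % 2 = 1 := Nat.odd_iff.mp hu
  have : p ≠ 2 := by rintro rfl; omega
  have := hpp.two_le
  omega

lemma ratio {u : ℕ} (hu : Odd u) (hu0 : u ≠ 0) :
    2 ^ u.primeFactors.card * u ≤ 3 ^ u.primeFactors.card * u.totient := by
  have hself : (∏ p ∈ u.primeFactors, p ^ u.factorization p) = u := by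
    rw [← Nat.support_factorization]
    exact Nat.factorization_prod_pow_eq_self hu0
  have htot : u.totient = ∏ p ∈ u.primeFactors, p ^ (u.factorization p - 1) * (p - 1) := by
    rw [Nat.totient_eq_prod_factorization hu0]; rfl
  calc 2 ^ u.primeFactors.card * u
      = ∏ p ∈ u.primeFactors, 2 * p ^ u.factorization p := by
        rw [Finset.prod_mul_distrib, Finset.prod_const, hself]
    _ ≤ ∏ p ∈ u.primeFactors, 3 * (p ^ (u.factorization p - 1) * (p - 1)) := by
        apply Finset.prod_le_prod'
        intro p hp
        have h3 : 3 ≤ p := prime_odd_three_le hu hp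
        have hk : 1 ≤ u.factorization p := by
          rw [← Nat.support_factorization] at hp
          exact Nat.one_le_iff_ne_zero.mpr (Finsupp.mem_support_iff.mp hp)
        have hpow : p ^ u.factorization p = p ^ (u.factorization p - 1) * p := by
          rw [← pow_succ]; congr 1; omega
        calc 2 * p ^ u.factorization p = p ^ (u.factorization p - 1) * (2 * p) := by
              rw [hpow]; ring
          _ ≤ p ^ (u.factorization p - 1) * (3 * (p - 1)) :=
              Nat.mul_le_mul_left _ (by omega)
          _ = 3 * (p ^ (u.factorization p - 1) * (p - 1)) := by ring
    _ = 3 ^ u.primeFactors.card * u.totient := by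
        rw [Finset.prod_mul_distrib, Finset.prod_const, htot]

lemma omega_dvd {u : ℕ} (hu : Odd u) (hu0 : u ≠ 0) :
    2 ^ u.primeFactors.card ∣ u.totient := by
  have htot : u.totient = ∏ p ∈ u.primeFactors, p ^ (u.factorization p - 1) * (p - 1) := by
    rw [Nat.totient_eq_prod_factorization hu0]; rfl
  rw [htot, ← Finset.prod_const]
  apply Finset.prod_dvd_prod_of_dvd
  intro p hp
  have h3 : 3 ≤ p := prime_odd_three_le hu hp
  have hodd : p % 2 = 1 :=
    Nat.odd_iff.mp ((Nat.prime_of_mem_primeFactors hp).odd_of_ne_two (by omega))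
  exact Dvd.dvd.mul_left (by omega : 2 ∣ p - 1) _

lemma pow_swap {a b : ℕ} (h : a ≤ b) : 3^a * 2^b ≤ 2^a * 3^b := by
  obtain ⟨d, rfl⟩ := Nat.exists_eq_add_of_le h
  have hd : (2:ℕ)^d ≤ 3^d := Nat.pow_le_pow_left (by norm_num) d
  calc 3^a * 2^(a+d) = 2^a * (3^a * 2^d) := by rw [pow_add]; ring
    _ ≤ 2^a * (3^a * 3^d) := Nat.mul_le_mul_left _ (Nat.mul_le_mul_left _ hd)
    _ = 2^a * 3^(a+d) := by rw [pow_add]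

lemma odd_bound : ∀ u, Odd u → 3 ≤ u → 3 * u ≤ 3 ^ H u := by
  intro u
  induction u using Nat.strong_induction_on with
  | _ u ih =>
    intro hu hu3
    set m := u.totient with hm
    have hm_even : Even m := Nat.totient_even (by omega)
    have hm_pos : 0 < m := Nat.totient_pos.mpr (by omega)
    have hm_lt : m < u := Nat.totient_lt u (by omega)
    set w := m.factorization 2 with hw
    set c := m / 2 ^ w with hc
    have hmc : 2 ^ w * c = m := Nat.ordProj_mul_ordCompl_eq_self m 2
    have hc_odd : Odd c := by
      have h2 : ¬ 2 ∣ c := by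
        rw [hc]; exact Nat.not_dvd_ordCompl Nat.prime_two (by omega)
      rw [Nat.odd_iff]; omega
    have hw1 : 1 ≤ w := by
      have : 2 ^ 1 ∣ m := by simpa using hm_even.two_dvd
      exact (Nat.Prime.pow_dvd_iff_le_factorization Nat.prime_two (by omega)).mp this
    set ω := u.primeFactors.card with hω
    have hωw : ω ≤ w :=
      (Nat.Prime.pow_dvd_iff_le_factorization Nat.prime_two (by omega)).mp
        (omega_dvd hu (by omega))
    have hrat : 2 ^ ω * u ≤ 3 ^ ω * m := ratio hu (by omega)
    have hswap : 3 ^ ω * 2 ^ w ≤ 2 ^ ω * 3 ^ w := pow_swap hωw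
    have hHu : H u = H m + 1 := H_def (by omega)
    have hc_pos : 0 < c := by
      rcases Nat.eq_zero_or_pos c with h | h
      · rw [h, mul_zero] at hmc; omega
      · exact h
    rcases eq_or_ne c 1 with h1 | h1
    · -- m = 2^w
      have hmeq : m = 2 ^ w := by rw [← hmc, h1, mul_one]
      have hHm : H m = w := by rw [hmeq]; exact H_two_pow w hw1
      have key : 2 ^ ω * u ≤ 2 ^ ω * 3 ^ w := by
        calc 2 ^ ω * u ≤ 3 ^ ω * m := hrat
          _ = 3 ^ ω * 2 ^ w := by rw [hmeq]
          _ ≤ 2 ^ ω * 3 ^ w := hswap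
      have : u ≤ 3 ^ w := Nat.le_of_mul_le_mul_left key (Nat.pow_pos (by norm_num))
      calc 3 * u ≤ 3 * 3 ^ w := by omega
        _ = 3 ^ (w + 1) := by rw [pow_succ]; ring
        _ = 3 ^ H u := by rw [hHu, hHm]
    · have hc3 : 3 ≤ c := by
        rcases hc_odd with ⟨r, hr⟩; omega
      have hc_lt : c < u := by
        have : c ≤ m := Nat.le_of_dvd hm_pos ⟨2 ^ w, by rw [← hmc]; ring⟩
        omega
      have hIH : 3 * c ≤ 3 ^ H c := ih c hc_lt hc_odd hc3
      have hHm : H m = (w - 1) + H c := by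
        rw [← hmc]; exact H_two_pow_mul_odd hc_odd hc3 w hw1
      have hexp : w + H c = H u := by rw [hHu, hHm]; omega
      have key : 2 ^ ω * (3 * u) ≤ 2 ^ ω * 3 ^ H u := by
        calc 2 ^ ω * (3 * u) = 3 * (2 ^ ω * u) := by ring
          _ ≤ 3 * (3 ^ ω * m) := by omega
          _ = 3 ^ ω * 2 ^ w * (3 * c) := by rw [← hmc]; ring
          _ ≤ 3 ^ ω * 2 ^ w * 3 ^ H c := Nat.mul_le_mul_left _ hIH
          _ ≤ 2 ^ ω * 3 ^ w * 3 ^ H c := Nat.mul_le_mul_right _ hswap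
          _ = 2 ^ ω * 3 ^ (w + H c) := by rw [pow_add]; ring
          _ = 2 ^ ω * 3 ^ H u := by rw [hexp]
      exact Nat.le_of_mul_le_mul_left key (Nat.pow_pos (by norm_num))

lemma H_three_pow : ∀ k, 1 ≤ k → H (3 ^ k) = k + 1 := by
  intro k
  induction k with
  | zero => omega
  | succ n ih =>
    intro _
    rcases Nat.eq_or_lt_of_le (Nat.one_le_iff_ne_zero.mpr (by omega) : 1 ≤ n + 1) with h | h
    · rw [← h, pow_one, H_def (by norm_num), show Nat.totient 3 = 2 from by decide, H_two]
    · have hn : 1 ≤ n := by omega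
      have htot : (3 ^ (n + 1)).totient = 2 * 3 ^ n := by
        rw [Nat.totient_prime_pow (by norm_num) (by omega), Nat.add_sub_cancel]
        ring
      have hodd : Odd (3 ^ n) := Odd.pow ⟨1, by norm_num⟩
      have h3n : 3 ≤ 3 ^ n := by
        calc (3:ℕ) = 3 ^ 1 := rfl
          _ ≤ 3 ^ n := Nat.pow_le_pow_right (by norm_num) hn
      have hge : 2 ≤ 3 ^ (n + 1) := by
        calc (2:ℕ) ≤ 3 ^ 1 := by norm_num
          _ ≤ 3 ^ (n + 1) := Nat.pow_le_pow_right (by norm_num) (by omega)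
      rw [H_def hge, htot, H_two_mul_odd hodd h3n, ih hn]

theorem largest_odd_at_height (h : ℕ) (hh : 2 ≤ h) :
    H (3 ^ (h - 1)) = h ∧ ∀ n : ℕ, Odd n → H n = h → n ≤ 3 ^ (h - 1) := by
  constructor
  · rw [H_three_pow (h - 1) (by omega)]; omega
  · intro n hodd hH
    have hn1 : n ≠ 1 := by rintro rfl; rw [H_one] at hH; omega
    have hn3 : 3 ≤ n := by rcases hodd with ⟨r, hr⟩; omega
    have := odd_bound n hodd hn3
    rw [hH] at this
    have h3 : (3:ℕ) ^ h = 3 * 3 ^ (h - 1) := by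
      rw [← pow_succ']; congr 1; omega
    omega
end
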